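/- √5 belongs to the Lagrange spectrum L, every element of L is ≥ √5 (i.e., min L = √5), and moreover ℓ((1+√5)/2) = √5. -/

import Mathlib

open scoped ENNReal

/-- The distance from a real number to the nearest integer. -/
noncomputable def distNearestInt (x : ℝ) : ℝ := |x - round x|

/-- The best constant of Diophantine approximation of `α`,
`ℓ(α) = limsup_{q → ∞} 1 / (q ⬝ ‖q α‖) ∈ [0, ∞]`. -/
noncomputable def lagrangeVal (α : ℝ) : ℝ≥0∞ :=
  Filter.limsup (fun q : ℕ => ENNReal.ofReal (1 / (q * distNearestInt (q * α)))) Filter.atTop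

/-- The Lagrange spectrum: the set of finite values `ℓ(α)` over irrational `α`. -/
def LagrangeSpectrum : Set ℝ :=
  {t | ∃ α : ℝ, Irrational α ∧ lagrangeVal α ≠ ⊤ ∧ (lagrangeVal α).toReal = t}

set_option maxHeartbeats 1000000

section Aux

lemma irr5 : Irrational (Real.sqrt 5) := by
  simpa using (Nat.prime_five).irrational_sqrt

lemma sq5 : Real.sqrt 5 ^ 2 = 5 := Real.sq_sqrt (by norm_num)

lemma s5pos : 0 < Real.sqrt 5 := Real.sqrt_pos.mpr (by norm_num)

lemma irr_ne_ratio {α : ℝ} (hα : Irrational α) (p q : ℤ) :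
    α ≠ (p : ℝ) / q := by
  intro h
  exact hα ⟨(p : ℚ) / q, by push_cast; rw [h]⟩

lemma dni_le (x : ℝ) (m : ℤ) : distNearestInt x ≤ |x - m| := by
  rw [distNearestInt, abs_sub_round_eq_min]
  have hf : Int.fract x = x - ⌊x⌋ := rfl
  rcases le_or_gt m ⌊x⌋ with h | h
  · have h1 : Int.fract x ≤ x - m := by
      have : (m : ℝ) ≤ (⌊x⌋ : ℝ) := by exact_mod_cast h
      rw [hf]; linarith
    calc min (Int.fract x) (1 - Int.fract x) ≤ Int.fract x := min_le_left _ _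
    _ ≤ x - m := h1
    _ ≤ |x - m| := le_abs_self _
  · have h1 : 1 - Int.fract x ≤ m - x := by
      have : (⌊x⌋ : ℝ) + 1 ≤ (m : ℝ) := by exact_mod_cast h
      rw [hf]; linarith
    calc min (Int.fract x) (1 - Int.fract x) ≤ 1 - Int.fract x := min_le_right _ _
    _ ≤ m - x := h1
    _ ≤ |x - m| := by rw [abs_sub_comm]; exact le_abs_self _

lemma dni_pos {x : ℝ} (hx : Irrational x) : 0 < distNearestInt x := by
  rw [distNearestInt, abs_pos, sub_ne_zero]
  exact hx.ne_int (round x)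

lemma numLemma' (s b d : ℝ) (hs : s ^ 2 = 5) (hd : 0 < d)
    (h1 : b ^ 2 + d ^ 2 ≤ s * (b * d)) (h2 : b ^ 2 + (b + d) ^ 2 ≤ s * (b * (b + d))) :
    s * d = 2 * b - d := by
  have hu : (2 * b - d) ≤ s * d := by nlinarith [sq_nonneg (2 * b - s * d - d)]
  have hl : s * d ≤ 2 * b - d := by
    nlinarith [sq_nonneg (2 * b - (s - 1) * (b + d)), sq_nonneg (b + d)]
  linarith

lemma key (α : ℝ) (hα : Irrational α) (a b c d : ℤ)
    (hb : 0 < b) (hd : 0 < d) (hdet : b * c - a * d = 1)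
    (h1 : (a : ℝ) / b < α) (h2 : α < (c : ℝ) / d) :
    ∃ p q : ℤ, 0 < q ∧ |α - p / q| < 1 / (Real.sqrt 5 * q ^ 2) ∧
      |α - p / q| < 1 / ((b : ℝ) * d) := by
  have hbR : (0:ℝ) < b := by exact_mod_cast hb
  have hdR : (0:ℝ) < d := by exact_mod_cast hd
  have hbdR : (0:ℝ) < (b:ℝ) + d := by linarith
  have hdetR : (b:ℝ) * c - a * d = 1 := by exact_mod_cast hdet
  have gap : (c:ℝ)/d - (a:ℝ)/b = 1/((b:ℝ)*d) := by
    rw [div_sub_div _ _ (ne_of_gt hdR) (ne_of_gt hbR)]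
    rw [show (c:ℝ)*b - d*a = 1 by linear_combination hdetR]
    rw [mul_comm (d:ℝ) b]
  have gap2 : ((a:ℝ)+c)/((b:ℝ)+d) - (a:ℝ)/b = 1/((b:ℝ)*((b:ℝ)+d)) := by
    rw [div_sub_div _ _ (ne_of_gt hbdR) (ne_of_gt hbR)]
    rw [show ((a:ℝ)+c)*b - ((b:ℝ)+d)*a = 1 by linear_combination hdetR]
    rw [mul_comm ((b:ℝ)+d) b]
  have gap3 : (c:ℝ)/d - ((a:ℝ)+c)/((b:ℝ)+d) = 1/((d:ℝ)*((b:ℝ)+d)) := by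
    rw [div_sub_div _ _ (ne_of_gt hdR) (ne_of_gt hbdR)]
    rw [show (c:ℝ)*((b:ℝ)+d) - d*((a:ℝ)+c) = 1 by linear_combination hdetR]
  have hm1 : (a:ℝ)/b < ((a:ℝ)+c)/((b:ℝ)+d) := by
    have : (0:ℝ) < 1/((b:ℝ)*((b:ℝ)+d)) := by positivity
    linarith
  have hm2 : ((a:ℝ)+c)/((b:ℝ)+d) < (c:ℝ)/d := by
    have : (0:ℝ) < 1/((d:ℝ)*((b:ℝ)+d)) := by positivity
    linarith
  by_cases hA : |α - (a:ℝ)/b| < 1 / (Real.sqrt 5 * (b:ℝ)^2)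
  · refine ⟨a, b, hb, hA, ?_⟩
    rw [abs_of_pos (by linarith), ← gap]; linarith
  by_cases hC : |α - (c:ℝ)/d| < 1 / (Real.sqrt 5 * (d:ℝ)^2)
  · refine ⟨c, d, hd, hC, ?_⟩
    rw [abs_of_neg (by linarith), neg_sub, ← gap]; linarith
  by_cases hM : |α - ((a:ℝ)+c)/((b:ℝ)+d)| < 1 / (Real.sqrt 5 * ((b:ℝ)+d)^2)
  · refine ⟨a + c, b + d, by positivity, ?_, ?_⟩
    · push_cast; exact hM
    · push_cast
      rw [abs_lt]
      refine ⟨by rw [← gap]; linarith, by rw [← gap]; linarith⟩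
  exfalso
  push_neg at hA hC hM
  rw [abs_of_pos (by linarith)] at hA
  rw [abs_of_neg (by linarith), neg_sub] at hC
  have A1 : 1 ≤ (α - (a:ℝ)/b) * (Real.sqrt 5 * (b:ℝ)^2) := by
    rw [div_le_iff₀ (by positivity)] at hA; linarith
  have C1 : 1 ≤ ((c:ℝ)/d - α) * (Real.sqrt 5 * (d:ℝ)^2) := by
    rw [div_le_iff₀ (by positivity)] at hC; linarith
  have E1 : (b:ℝ)^2 + (d:ℝ)^2 ≤ Real.sqrt 5 * ((b:ℝ) * d) := by
    have k1 := mul_le_mul_of_nonneg_left A1 (sq_nonneg (d:ℝ))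
    have k2 := mul_le_mul_of_nonneg_left C1 (sq_nonneg (b:ℝ))
    have k3 : (d:ℝ)^2 * ((α - (a:ℝ)/b) * (Real.sqrt 5 * (b:ℝ)^2))
        + (b:ℝ)^2 * (((c:ℝ)/d - α) * (Real.sqrt 5 * (d:ℝ)^2))
        = Real.sqrt 5 * ((b:ℝ)^2 * (d:ℝ)^2) * ((c:ℝ)/d - (a:ℝ)/b) := by ring
    have k4 : Real.sqrt 5 * ((b:ℝ)^2 * (d:ℝ)^2) * ((c:ℝ)/d - (a:ℝ)/b)
        = Real.sqrt 5 * ((b:ℝ)*d) := by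
      rw [gap]; field_simp
    nlinarith [k1, k2]
  have hne : α ≠ ((a:ℝ)+c)/((b:ℝ)+d) := by
    have := irr_ne_ratio hα (a+c) (b+d); push_cast at this; exact this
  rcases hne.lt_or_gt with hc | hc
  · have hM' := hM
    rw [abs_of_neg (by linarith), neg_sub] at hM'
    have M1 : 1 ≤ (((a:ℝ)+c)/((b:ℝ)+d) - α) * (Real.sqrt 5 * ((b:ℝ)+d)^2) := by
      rw [div_le_iff₀ (by positivity)] at hM'; linarith
    have E2 : (b:ℝ)^2 + ((b:ℝ)+d)^2 ≤ Real.sqrt 5 * ((b:ℝ) * ((b:ℝ)+d)) := by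
      have k1 := mul_le_mul_of_nonneg_left A1 (sq_nonneg ((b:ℝ)+d))
      have k2 := mul_le_mul_of_nonneg_left M1 (sq_nonneg (b:ℝ))
      have k3 : ((b:ℝ)+d)^2 * ((α - (a:ℝ)/b) * (Real.sqrt 5 * (b:ℝ)^2))
          + (b:ℝ)^2 * ((((a:ℝ)+c)/((b:ℝ)+d) - α) * (Real.sqrt 5 * ((b:ℝ)+d)^2))
          = Real.sqrt 5 * ((b:ℝ)^2 * ((b:ℝ)+d)^2) * (((a:ℝ)+c)/((b:ℝ)+d) - (a:ℝ)/b) := by ring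
      have k4 : Real.sqrt 5 * ((b:ℝ)^2 * ((b:ℝ)+d)^2) * (((a:ℝ)+c)/((b:ℝ)+d) - (a:ℝ)/b)
          = Real.sqrt 5 * ((b:ℝ) * ((b:ℝ)+d)) := by
        rw [gap2]; field_simp
      nlinarith [k1, k2]
    have hfin := numLemma' (Real.sqrt 5) b d sq5 hdR E1 E2
    exact irr_ne_ratio irr5 (2*b - d) d
      (by push_cast; rw [eq_div_iff (ne_of_gt hdR)]; exact hfin)
  · have hM' := hM
    rw [abs_of_pos (by linarith)] at hM'
    have M1 : 1 ≤ (α - ((a:ℝ)+c)/((b:ℝ)+d)) * (Real.sqrt 5 * ((b:ℝ)+d)^2) := by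
      rw [div_le_iff₀ (by positivity)] at hM'; linarith
    have E2 : (d:ℝ)^2 + ((d:ℝ)+b)^2 ≤ Real.sqrt 5 * ((d:ℝ) * ((d:ℝ)+b)) := by
      have k1 := mul_le_mul_of_nonneg_left C1 (sq_nonneg ((b:ℝ)+d))
      have k2 := mul_le_mul_of_nonneg_left M1 (sq_nonneg (d:ℝ))
      have k3 : ((b:ℝ)+d)^2 * (((c:ℝ)/d - α) * (Real.sqrt 5 * (d:ℝ)^2))
          + (d:ℝ)^2 * ((α - ((a:ℝ)+c)/((b:ℝ)+d)) * (Real.sqrt 5 * ((b:ℝ)+d)^2))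
          = Real.sqrt 5 * ((d:ℝ)^2 * ((b:ℝ)+d)^2) * ((c:ℝ)/d - ((a:ℝ)+c)/((b:ℝ)+d)) := by ring
      have k4 : Real.sqrt 5 * ((d:ℝ)^2 * ((b:ℝ)+d)^2) * ((c:ℝ)/d - ((a:ℝ)+c)/((b:ℝ)+d))
          = Real.sqrt 5 * ((d:ℝ) * ((d:ℝ)+b)) := by
        rw [gap3]; field_simp; ring
      nlinarith [k1, k2]
    have E1' : (d:ℝ)^2 + (b:ℝ)^2 ≤ Real.sqrt 5 * ((d:ℝ) * b) := by
      rw [show (d:ℝ)*b = (b:ℝ)*d by ring]; linarith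
    have hfin := numLemma' (Real.sqrt 5) d b sq5 hbR E1' E2
    exact irr_ne_ratio irr5 (2*d - b) b
      (by push_cast; rw [eq_div_iff (ne_of_gt hbR)]; exact hfin)

open scoped Classical in
/-- Stern-Brocot style interval refinement around `α`. -/
noncomputable def sb (α : ℝ) : ℕ → ℤ × ℤ × ℤ × ℤ
  | 0 => (⌊α⌋, 1, ⌊α⌋ + 1, 1)
  | n + 1 =>
    let t := sb α n
    if α < ((t.1 : ℝ) + t.2.2.1) / ((t.2.1 : ℝ) + t.2.2.2)
    then (t.1, t.2.1, t.1 + t.2.2.1, t.2.1 + t.2.2.2)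
    else (t.1 + t.2.2.1, t.2.1 + t.2.2.2, t.2.2.1, t.2.2.2)

lemma sb_inv (α : ℝ) (hα : Irrational α) (n : ℕ) :
    0 < (sb α n).2.1 ∧ 0 < (sb α n).2.2.2 ∧
    (sb α n).2.1 * (sb α n).2.2.1 - (sb α n).1 * (sb α n).2.2.2 = 1 ∧
    ((sb α n).1 : ℝ) / (sb α n).2.1 < α ∧ α < ((sb α n).2.2.1 : ℝ) / (sb α n).2.2.2 ∧
    (n : ℤ) + 2 ≤ (sb α n).2.1 + (sb α n).2.2.2 := by
  induction n with
  | zero =>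
    refine ⟨one_pos, one_pos, by simp [sb], ?_, ?_, by simp [sb]⟩
    · simp only [sb, Int.cast_one, div_one]
      exact (Int.floor_le α).lt_of_ne ((hα.ne_int ⌊α⌋).symm)
    · simp only [sb, Int.cast_one, div_one]
      push_cast
      exact Int.lt_floor_add_one α
  | succ n ih =>
    obtain ⟨hb, hd, hdet, h1, h2, hsum⟩ := ih
    have hne : α ≠ (((sb α n).1 : ℝ) + (sb α n).2.2.1) / (((sb α n).2.1 : ℝ) + (sb α n).2.2.2) := by
      have := irr_ne_ratio hα ((sb α n).1 + (sb α n).2.2.1) ((sb α n).2.1 + (sb α n).2.2.2)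
      push_cast at this; exact this
    simp only [sb]
    split_ifs with h
    · refine ⟨hb, by positivity, by linear_combination hdet, h1, by push_cast; exact h, ?_⟩
      push_cast
      omega
    · refine ⟨by positivity, hd, by linear_combination hdet,
        by push_cast; exact (not_lt.mp h).lt_of_ne hne.symm, h2, ?_⟩
      push_cast
      omega

lemma hurwitz_aux (α : ℝ) (hα : Irrational α) {δ : ℝ} (hδ : 0 < δ) :
    ∃ p q : ℤ, 0 < q ∧ |α - p / q| < 1 / (Real.sqrt 5 * q ^ 2) ∧ |α - p / q| < δ := by
  obtain ⟨n, hn⟩ := exists_nat_gt (1 / δ)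
  obtain ⟨hb, hd, hdet, h1, h2, hsum⟩ := sb_inv α hα n
  obtain ⟨p, q, hq, hh, he⟩ := key α hα _ _ _ _ hb hd hdet h1 h2
  refine ⟨p, q, hq, hh, lt_of_lt_of_le he ?_⟩
  have hbd : (n : ℤ) + 1 ≤ (sb α n).2.1 * (sb α n).2.2.2 := by nlinarith [hb, hd, hsum]
  have hbdR : (n : ℝ) + 1 ≤ ((sb α n).2.1 : ℝ) * (sb α n).2.2.2 := by exact_mod_cast hbd
  have hpos : (0:ℝ) < ((sb α n).2.1 : ℝ) * (sb α n).2.2.2 := by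
    have h1 : (0:ℝ) < ((sb α n).2.1 : ℝ) := by exact_mod_cast hb
    have h2 : (0:ℝ) < ((sb α n).2.2.2 : ℝ) := by exact_mod_cast hd
    positivity
  rw [div_le_iff₀ hpos]
  have : 1 / δ < ((sb α n).2.1 : ℝ) * (sb α n).2.2.2 := by linarith
  rw [div_lt_iff₀ hδ] at this
  linarith

lemma freq (α : ℝ) (hα : Irrational α) (N : ℕ) :
    ∃ q : ℕ, N ≤ q ∧ 0 < q ∧ (q : ℝ) * distNearestInt (q * α) < 1 / Real.sqrt 5 := by
  set T : Finset ℝ :=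
    insert (1:ℝ) ((Finset.Icc 1 N).image fun k : ℕ => distNearestInt (k * α) / k) with hT
  have hTne : T.Nonempty := ⟨1, Finset.mem_insert_self _ _⟩
  set δ := T.min' hTne with hδdef
  have hδpos : 0 < δ := by
    have hmem := T.min'_mem hTne
    rw [← hδdef] at hmem
    rw [hT] at hmem
    rcases Finset.mem_insert.mp hmem with h | h
    · rw [h]; norm_num
    · obtain ⟨k, hk, hkeq⟩ := Finset.mem_image.mp h
      have hk1 : 1 ≤ k := (Finset.mem_Icc.mp hk).1
      have : 0 < distNearestInt (k * α) := dni_pos (hα.natCast_mul (by omega))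
      rw [← hkeq]
      positivity
  obtain ⟨p, q, hq, hh, he⟩ := hurwitz_aux α hα hδpos
  refine ⟨q.toNat, ?_, by omega, ?_⟩
  · -- N ≤ q.toNat
    by_contra hlt
    push_neg at hlt
    have hq1 : 1 ≤ q.toNat := by omega
    have hmem : distNearestInt ((q.toNat : ℕ) * α) / (q.toNat : ℕ) ∈ T := by
      rw [hT]
      exact Finset.mem_insert_of_mem (Finset.mem_image_of_mem _
        (Finset.mem_Icc.mpr ⟨hq1, by omega⟩))
    have hδle : δ ≤ distNearestInt ((q.toNat : ℕ) * α) / (q.toNat : ℕ) := Finset.min'_le _ _ hmem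
    have hqR : ((q.toNat : ℕ) : ℝ) = (q : ℝ) := by
      exact_mod_cast congrArg (Int.cast : ℤ → ℝ) (Int.toNat_of_nonneg hq.le)
    have hqpos : (0:ℝ) < (q:ℝ) := by exact_mod_cast hq
    have hd1 : distNearestInt ((q:ℝ) * α) ≤ |(q:ℝ) * α - p| := dni_le ((q:ℝ) * α) p
    have hd2 : |(q:ℝ) * α - p| = (q:ℝ) * |α - p / q| := by
      have h : (q:ℝ) * α - p = (q:ℝ) * (α - p / q) := by
        field_simp
      rw [h, abs_mul, abs_of_pos hqpos]
    have : distNearestInt ((q.toNat : ℕ) * α) / (q.toNat : ℕ) < δ := by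
      rw [hqR, div_lt_iff₀ hqpos]
      calc distNearestInt ((q:ℝ) * α) ≤ (q:ℝ) * |α - p / q| := by rw [← hd2]; exact hd1
      _ < (q:ℝ) * δ := by
        apply mul_lt_mul_of_pos_left he hqpos
      _ = δ * q := mul_comm _ _
    linarith
  · -- q.toNat * dist < 1/√5
    have hqR : ((q.toNat : ℕ) : ℝ) = (q : ℝ) := by
      exact_mod_cast congrArg (Int.cast : ℤ → ℝ) (Int.toNat_of_nonneg hq.le)
    have hqpos : (0:ℝ) < (q:ℝ) := by exact_mod_cast hq
    simp only [hqR]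
    have hd1 : distNearestInt ((q:ℝ) * α) ≤ |(q:ℝ) * α - p| := dni_le ((q:ℝ) * α) p
    have hd2 : |(q:ℝ) * α - p| = (q:ℝ) * |α - p / q| := by
      have h : (q:ℝ) * α - p = (q:ℝ) * (α - p / q) := by
        field_simp
      rw [h, abs_mul, abs_of_pos hqpos]
    calc (q:ℝ) * distNearestInt ((q:ℝ) * α)
        ≤ (q:ℝ) * ((q:ℝ) * |α - p / q|) := by
          apply mul_le_mul_of_nonneg_left _ hqpos.le
          rw [← hd2]; exact hd1
    _ < (q:ℝ) * ((q:ℝ) * (1 / (Real.sqrt 5 * (q:ℝ) ^ 2))) := by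
          apply mul_lt_mul_of_pos_left (mul_lt_mul_of_pos_left hh hqpos) hqpos
    _ = 1 / Real.sqrt 5 := by
          field_simp
  
lemma lagrange_ge (α : ℝ) (hα : Irrational α) :
    ENNReal.ofReal (Real.sqrt 5) ≤ lagrangeVal α := by
  apply Filter.le_limsup_of_frequently_le'
  rw [Filter.frequently_atTop]
  intro N
  obtain ⟨q, hNq, hq0, hlt⟩ := freq α hα N
  refine ⟨q, hNq, ENNReal.ofReal_le_ofReal ?_⟩
  have hdpos : 0 < distNearestInt (q * α) := dni_pos (hα.natCast_mul hq0.ne')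
  have hqpos : (0:ℝ) < (q:ℝ) := by exact_mod_cast hq0
  rw [le_div_iff₀ (by positivity)]
  rw [lt_div_iff₀ s5pos] at hlt
  linarith

lemma irr_phi : Irrational ((1 + Real.sqrt 5) / 2) := by
  have h1 : Irrational ((1:ℚ) + Real.sqrt 5) := irr5.ratCast_add (q := 1)
  have h2 : Irrational ((1 + Real.sqrt 5) / ((2:ℤ) : ℝ)) := by
    apply Irrational.div_intCast _ (by norm_num)
    simpa using h1
  simpa using h2

lemma irr_phi' : Irrational ((1 - Real.sqrt 5) / 2) := by
  have h1 : Irrational ((1:ℚ) + -Real.sqrt 5) := irr5.neg.ratCast_add (q := 1)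
  have h2 : Irrational ((1 + -Real.sqrt 5) / ((2:ℤ) : ℝ)) := by
    apply Irrational.div_intCast _ (by norm_num)
    simpa using h1
  have h3 : (1 - Real.sqrt 5) / 2 = (1 + -Real.sqrt 5) / ((2:ℤ):ℝ) := by push_cast; ring
  rwa [h3]

lemma golden_bound (q : ℕ) (hq : 0 < q) :
    1 / ((q:ℝ) * distNearestInt (q * ((1 + Real.sqrt 5) / 2)))
      ≤ Real.sqrt 5 + 1 / (2 * q) := by
  set s := Real.sqrt 5
  set φ : ℝ := (1 + s) / 2 with hφ
  set p : ℤ := round ((q:ℝ) * φ) with hp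
  set D : ℝ := (q:ℝ) * φ - p with hD
  have hdist : distNearestInt ((q:ℝ) * φ) = |D| := rfl
  have hD2 : |D| ≤ 1 / 2 := abs_sub_round _
  have hirr : Irrational ((q:ℝ) * φ) := irr_phi.natCast_mul hq.ne'
  have hDpos : 0 < |D| := by
    rw [hD, abs_pos, sub_ne_zero]
    exact hirr.ne_int p
  have hqpos : (0:ℝ) < (q:ℝ) := by exact_mod_cast hq
  -- the integer p² - pq - q² is nonzero
  have hm0 : (p:ℤ)^2 - p * q - q^2 ≠ 0 := by
    intro h0
    have h0R : (p:ℝ)^2 - (p:ℝ) * q - (q:ℝ)^2 = 0 := by exact_mod_cast h0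
    have hfac : ((p:ℝ) - q * φ) * ((p:ℝ) - q * ((1 - s)/2)) = (p:ℝ)^2 - (p:ℝ) * q - (q:ℝ)^2 := by
      rw [hφ]
      have h5 : s ^ 2 = 5 := sq5
      linear_combination (-(q:ℝ)^2 / 4) * h5
    rw [h0R] at hfac
    rcases mul_eq_zero.mp hfac with h | h
    · exact hDpos.ne' (by rw [hD, abs_eq_zero]; linarith [sub_eq_zero.mp h])
    · have : (1 - s)/2 = (p:ℝ) / q := by
        rw [eq_div_iff (ne_of_gt hqpos)]
        have := sub_eq_zero.mp h
        linarith [this]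
      exact irr_phi' (by rw [this]; exact ⟨(p:ℚ)/q, by push_cast; ring⟩)
  have habs : (1:ℝ) ≤ |(p:ℝ)^2 - (p:ℝ) * q - (q:ℝ)^2| := by
    have h1 : (1:ℤ) ≤ |(p:ℤ)^2 - p * q - q^2| := Int.one_le_abs hm0
    calc (1:ℝ) = ((1:ℤ):ℝ) := by norm_num
    _ ≤ ((|(p:ℤ)^2 - p * q - q^2| : ℤ) : ℝ) := by exact_mod_cast h1
    _ = |(p:ℝ)^2 - (p:ℝ) * q - (q:ℝ)^2| := by push_cast; ring_nf
  have hfac2 : D * ((q:ℝ) * ((1 - s)/2) - p) = (p:ℝ)^2 - (p:ℝ) * q - (q:ℝ)^2 := by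
    rw [hD, hφ]
    have h5 : s ^ 2 = 5 := sq5
    linear_combination (-(q:ℝ)^2 / 4) * h5
  have hE : |(q:ℝ) * ((1 - s)/2) - p| ≤ (q:ℝ) * s + 1/2 := by
    have : (q:ℝ) * ((1 - s)/2) - p = D - (q:ℝ) * s := by rw [hD, hφ]; ring
    rw [this]
    calc |D - (q:ℝ) * s| ≤ |D| + |(q:ℝ) * s| := abs_sub _ _
    _ ≤ 1/2 + (q:ℝ) * s := by
        have : |(q:ℝ) * s| = (q:ℝ) * s := abs_of_pos (by positivity)
        rw [this]; linarith
    _ = (q:ℝ) * s + 1/2 := by ring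
  have hkey : 1 ≤ |D| * ((q:ℝ) * s + 1/2) := by
    calc (1:ℝ) ≤ |(p:ℝ)^2 - (p:ℝ) * q - (q:ℝ)^2| := habs
    _ = |D| * |(q:ℝ) * ((1 - s)/2) - p| := by rw [← hfac2, abs_mul]
    _ ≤ |D| * ((q:ℝ) * s + 1/2) := mul_le_mul_of_nonneg_left hE hDpos.le
  rw [hdist, div_le_iff₀ (by positivity)]
  have heq : (s + 1 / (2 * (q:ℝ))) * ((q:ℝ) * |D|) = |D| * ((q:ℝ) * s + 1/2) := by
    field_simp
  rw [heq]
  exact hkey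

lemma golden_upper :
    lagrangeVal ((1 + Real.sqrt 5) / 2) ≤ ENNReal.ofReal (Real.sqrt 5) := by
  have h0 : Filter.Tendsto (fun q : ℕ => 1 / (2 * (q:ℝ))) Filter.atTop (nhds 0) := by
    have h := Filter.Tendsto.const_mul (1/2 : ℝ) tendsto_one_div_atTop_nhds_zero_nat
    rw [mul_zero] at h
    refine h.congr fun q => ?_
    rw [div_mul_div_comm, one_mul]
  have hg : Filter.Tendsto (fun q : ℕ => ENNReal.ofReal (Real.sqrt 5 + 1 / (2 * (q:ℝ))))
      Filter.atTop (nhds (ENNReal.ofReal (Real.sqrt 5))) := by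
    apply ENNReal.tendsto_ofReal
    simpa using tendsto_const_nhds.add h0
  refine le_trans (Filter.limsup_le_limsup ?_) (le_of_eq hg.limsup_eq)
  filter_upwards [Filter.eventually_ge_atTop 1] with q hq
  exact ENNReal.ofReal_le_ofReal (golden_bound q hq)

end Aux

/-- `√5` belongs to the Lagrange spectrum, it is a lower bound for the Lagrange spectrum
(so that `min L = √5`), and `ℓ((1+√5)/2) = √5`. -/
theorem sqrt_five_min_of_lagrange :
    Real.sqrt 5 ∈ LagrangeSpectrum ∧
    (∀ x ∈ LagrangeSpectrum, Real.sqrt 5 ≤ x) ∧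
    lagrangeVal ((1 + Real.sqrt 5) / 2) = ENNReal.ofReal (Real.sqrt 5) := by
  have hval : lagrangeVal ((1 + Real.sqrt 5) / 2) = ENNReal.ofReal (Real.sqrt 5) :=
    le_antisymm golden_upper (lagrange_ge _ irr_phi)
  refine ⟨⟨(1 + Real.sqrt 5) / 2, irr_phi, ?_, ?_⟩, ?_, hval⟩
  · rw [hval]; exact ENNReal.ofReal_ne_top
  · rw [hval]; exact ENNReal.toReal_ofReal (Real.sqrt_nonneg 5)
  · rintro x ⟨α, hα, hne, rfl⟩
    have hge := lagrange_ge α hα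
    calc Real.sqrt 5 = (ENNReal.ofReal (Real.sqrt 5)).toReal :=
        (ENNReal.toReal_ofReal (Real.sqrt_nonneg 5)).symm
    _ ≤ (lagrangeVal α).toReal := (ENNReal.toReal_le_toReal ENNReal.ofReal_ne_top hne).mpr hge
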